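/- Let F : ℝ → ℝ be continuous and let u, v : ℝ → ℝ be twice differentiable functions satisfying u''(t) + F(t)²·u(t) = 0 and v''(t) + F(t)²·v(t) = 0 for all t, with constant Wronskian W = u(t)·v'(t) − u'(t)·v(t). Define vector fields on ℝ² (coordinates (t, x)) by Γ₁(t, x) = (u(t)², u(t)·u'(t)·x), Γ₂(t, x) = (u(t)·v(t), (1/2)(u'(t)·v(t) + u(t)·v'(t))·x), Γ₃(t, x) = (v(t)², v(t)·v'(t)·x). Then [Γ₁, Γ₂] = W·Γ₁, [Γ₁, Γ₃] = 2W·Γ₂, and [Γ₂, Γ₃] = W·Γ₃ at every point of ℝ². -/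

import Mathlib

/-- The Lie bracket of two vector fields on `ℝ²`:
`[V, W](p) = DW(p)·V(p) − DV(p)·W(p)`. -/
noncomputable def lieBracketVF (V W : ℝ × ℝ → ℝ × ℝ) (p : ℝ × ℝ) : ℝ × ℝ :=
  fderiv ℝ W p (V p) - fderiv ℝ V p (W p)

lemma fdVF (a b : ℝ → ℝ) (p w : ℝ × ℝ)
    (ha : DifferentiableAt ℝ a p.1) (hb : DifferentiableAt ℝ b p.1) :
    fderiv ℝ (fun q : ℝ × ℝ => (a q.1, b q.1 * q.2)) p w
      = (deriv a p.1 * w.1, deriv b p.1 * w.1 * p.2 + b p.1 * w.2) := by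
  have h1 : HasFDerivAt (fun q : ℝ × ℝ => a q.1)
      ((fderiv ℝ a p.1).comp (ContinuousLinearMap.fst ℝ ℝ ℝ)) p :=
    ha.hasFDerivAt.comp p (hasFDerivAt_fst)
  have h2 : HasFDerivAt (fun q : ℝ × ℝ => b q.1)
      ((fderiv ℝ b p.1).comp (ContinuousLinearMap.fst ℝ ℝ ℝ)) p :=
    hb.hasFDerivAt.comp p (hasFDerivAt_fst)
  have h3 := h2.mul (hasFDerivAt_snd (𝕜 := ℝ) (E := ℝ) (F := ℝ))
  have h4 : fderiv ℝ (fun q : ℝ × ℝ => (a q.1, b q.1 * q.2)) p = _ := (h1.prodMk h3).fderiv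
  rw [h4]
  have ea : fderiv ℝ a p.1 = ContinuousLinearMap.smulRight (1 : ℝ →L[ℝ] ℝ) (deriv a p.1) :=
    ha.hasDerivAt.hasFDerivAt.fderiv
  have eb : fderiv ℝ b p.1 = ContinuousLinearMap.smulRight (1 : ℝ →L[ℝ] ℝ) (deriv b p.1) :=
    hb.hasDerivAt.hasFDerivAt.fderiv
  simp [ea, eb, smul_eq_mul]
  constructor <;> ring

/-- For the Ermakov–Pinney equation with time-dependent frequency, the symmetries
`Γ₁ = u²∂ₜ + uu'x∂ₓ`, `Γ₂ = uv∂ₜ + (1/2)(u'v + uv')x∂ₓ`, `Γ₃ = v²∂ₜ + vv'x∂ₓ`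
satisfy `[Γ₁,Γ₂] = WΓ₁`, `[Γ₁,Γ₃] = 2WΓ₂`, `[Γ₂,Γ₃] = WΓ₃`, where `W` is the
(constant) Wronskian of `u` and `v`. -/
theorem time_dependent_ermakov_pinney_symmetry_algebra
    (F : ℝ → ℝ) (hF : Continuous F)
    (u v : ℝ → ℝ)
    (hu : Differentiable ℝ u) (hu' : Differentiable ℝ (deriv u))
    (hv : Differentiable ℝ v) (hv' : Differentiable ℝ (deriv v))
    (hueq : ∀ t, deriv (deriv u) t + (F t) ^ 2 * u t = 0)
    (hveq : ∀ t, deriv (deriv v) t + (F t) ^ 2 * v t = 0)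
    (W : ℝ) (hW : ∀ t, u t * deriv v t - deriv u t * v t = W)
    (Γ₁ Γ₂ Γ₃ : ℝ × ℝ → ℝ × ℝ)
    (hΓ₁ : Γ₁ = fun p => ((u p.1) ^ 2, u p.1 * deriv u p.1 * p.2))
    (hΓ₂ : Γ₂ = fun p => (u p.1 * v p.1,
        (1 / 2) * (deriv u p.1 * v p.1 + u p.1 * deriv v p.1) * p.2))
    (hΓ₃ : Γ₃ = fun p => ((v p.1) ^ 2, v p.1 * deriv v p.1 * p.2)) :
    (∀ p : ℝ × ℝ, lieBracketVF Γ₁ Γ₂ p = W • Γ₁ p) ∧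
    (∀ p : ℝ × ℝ, lieBracketVF Γ₁ Γ₃ p = (2 * W) • Γ₂ p) ∧
    (∀ p : ℝ × ℝ, lieBracketVF Γ₂ Γ₃ p = W • Γ₃ p) := by
  subst hΓ₁ hΓ₂ hΓ₃
  -- differentiability facts
  have dA1 : ∀ s : ℝ, DifferentiableAt ℝ (fun s => u s ^ 2) s := fun s => (hu s).pow 2
  have dB1 : ∀ s : ℝ, DifferentiableAt ℝ (fun s => u s * deriv u s) s :=
    fun s => (hu s).mul (hu' s)
  have dA2 : ∀ s : ℝ, DifferentiableAt ℝ (fun s => u s * v s) s := fun s => (hu s).mul (hv s)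
  have dB2 : ∀ s : ℝ, DifferentiableAt ℝ
      (fun s => 1 / 2 * (deriv u s * v s + u s * deriv v s)) s :=
    fun s => (((hu' s).mul (hv s)).add ((hu s).mul (hv' s))).const_mul _
  have dA3 : ∀ s : ℝ, DifferentiableAt ℝ (fun s => v s ^ 2) s := fun s => (hv s).pow 2
  have dB3 : ∀ s : ℝ, DifferentiableAt ℝ (fun s => v s * deriv v s) s :=
    fun s => (hv s).mul (hv' s)
  -- derivative values
  have da1 : ∀ t : ℝ, deriv (fun s => u s ^ 2) t = 2 * u t * deriv u t := by
    intro t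
    have : deriv (fun s => u s ^ 2) t = _ := ((hu t).hasDerivAt.pow 2).deriv
    simpa [mul_comm, mul_assoc] using this
  have da3 : ∀ t : ℝ, deriv (fun s => v s ^ 2) t = 2 * v t * deriv v t := by
    intro t
    have : deriv (fun s => v s ^ 2) t = _ := ((hv t).hasDerivAt.pow 2).deriv
    simpa [mul_comm, mul_assoc] using this
  have db1 : ∀ t : ℝ, deriv (fun s => u s * deriv u s) t
      = deriv u t * deriv u t + u t * deriv (deriv u) t :=
    fun t => ((hu t).hasDerivAt.mul (hu' t).hasDerivAt).deriv
  have db3 : ∀ t : ℝ, deriv (fun s => v s * deriv v s) t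
      = deriv v t * deriv v t + v t * deriv (deriv v) t :=
    fun t => ((hv t).hasDerivAt.mul (hv' t).hasDerivAt).deriv
  have da2 : ∀ t : ℝ, deriv (fun s => u s * v s) t
      = deriv u t * v t + u t * deriv v t :=
    fun t => ((hu t).hasDerivAt.mul (hv t).hasDerivAt).deriv
  have db2 : ∀ t : ℝ, deriv (fun s => 1 / 2 * (deriv u s * v s + u s * deriv v s)) t
      = 1 / 2 * ((deriv (deriv u) t * v t + deriv u t * deriv v t)
          + (deriv u t * deriv v t + u t * deriv (deriv v) t)) :=
    fun t => (HasDerivAt.const_mul (1 / 2 : ℝ)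
      (((hu' t).hasDerivAt.mul (hv t).hasDerivAt).add
        ((hu t).hasDerivAt.mul (hv' t).hasDerivAt))).deriv
  have h2u : ∀ t : ℝ, deriv (deriv u) t = -(F t ^ 2 * u t) := fun t => by linarith [hueq t]
  have h2v : ∀ t : ℝ, deriv (deriv v) t = -(F t ^ 2 * v t) := fun t => by linarith [hveq t]
  refine ⟨?_, ?_, ?_⟩ <;> intro p
  · show fderiv ℝ (fun q : ℝ × ℝ => ((fun s => u s * v s) q.1,
        (fun s => 1 / 2 * (deriv u s * v s + u s * deriv v s)) q.1 * q.2)) p _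
      - fderiv ℝ (fun q : ℝ × ℝ => ((fun s => u s ^ 2) q.1,
        (fun s => u s * deriv u s) q.1 * q.2)) p _ = _
    rw [fdVF _ _ _ _ (dA2 p.1) (dB2 p.1), fdVF _ _ _ _ (dA1 p.1) (dB1 p.1)]
    rw [da1 p.1, db1 p.1, da2 p.1, db2 p.1, h2u p.1, h2v p.1]
    refine Prod.ext ?_ ?_ <;> simp [Prod.smul_def, smul_eq_mul]
    · linear_combination (u p.1) ^ 2 * hW p.1
    · linear_combination p.2 * u p.1 * deriv u p.1 * hW p.1
  · show fderiv ℝ (fun q : ℝ × ℝ => ((fun s => v s ^ 2) q.1,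
        (fun s => v s * deriv v s) q.1 * q.2)) p _
      - fderiv ℝ (fun q : ℝ × ℝ => ((fun s => u s ^ 2) q.1,
        (fun s => u s * deriv u s) q.1 * q.2)) p _ = _
    rw [fdVF _ _ _ _ (dA3 p.1) (dB3 p.1), fdVF _ _ _ _ (dA1 p.1) (dB1 p.1)]
    rw [da1 p.1, db1 p.1, da3 p.1, db3 p.1, h2u p.1, h2v p.1]
    refine Prod.ext ?_ ?_ <;> simp [Prod.smul_def, smul_eq_mul]
    · linear_combination (2 * u p.1 * v p.1) * hW p.1
    · linear_combination p.2 * (u p.1 * deriv v p.1 + deriv u p.1 * v p.1) * hW p.1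
  · show fderiv ℝ (fun q : ℝ × ℝ => ((fun s => v s ^ 2) q.1,
        (fun s => v s * deriv v s) q.1 * q.2)) p _
      - fderiv ℝ (fun q : ℝ × ℝ => ((fun s => u s * v s) q.1,
        (fun s => 1 / 2 * (deriv u s * v s + u s * deriv v s)) q.1 * q.2)) p _ = _
    rw [fdVF _ _ _ _ (dA3 p.1) (dB3 p.1), fdVF _ _ _ _ (dA2 p.1) (dB2 p.1)]
    rw [da2 p.1, db2 p.1, da3 p.1, db3 p.1, h2u p.1, h2v p.1]
    refine Prod.ext ?_ ?_ <;> simp [Prod.smul_def, smul_eq_mul]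
    · linear_combination (v p.1) ^ 2 * hW p.1
    · linear_combination p.2 * v p.1 * deriv v p.1 * hW p.1
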